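/- For all 1 ≤ s, t ≤ k one has the bracket formula [e_s, e_t] = e_s e_t − e_t e_s = (s − t)·e_{s+t−1} (with the convention e_m = 0 for m > k). Consequently g_k = span_ℂ{e_1, …, e_k} is a Lie subalgebra of gl_k(ℂ), and g_k = ℂ·e_1 ⊕ u_k where u_k = span_ℂ{e_2, …, e_k}. -/

import Mathlib

/-- The matrix `e_s` with `(e_s)_{i,j} = i` if `j = i + s - 1` and `0` otherwise
(1-indexed); for `s > k` this is automatically the zero matrix. -/
def Emat (k s : ℕ) : Matrix (Fin k) (Fin k) ℂ :=
  fun i j => if (j : ℕ) + 1 = (i : ℕ) + s then ((i : ℕ) + 1 : ℂ) else 0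

/-- `g_k = span_ℂ{e_1, …, e_k}`, the Lie algebra of the reparametrization group `G_k`. -/
noncomputable def gkAlg (k : ℕ) : Submodule ℂ (Matrix (Fin k) (Fin k) ℂ) :=
  Submodule.span ℂ (Emat k '' {s | 1 ≤ s ∧ s ≤ k})

/-- `u_k = span_ℂ{e_2, …, e_k}`. -/
noncomputable def ukAlg (k : ℕ) : Submodule ℂ (Matrix (Fin k) (Fin k) ℂ) :=
  Submodule.span ℂ (Emat k '' {s | 2 ≤ s ∧ s ≤ k})

lemma Emat_mul (k s t : ℕ) (hs : 1 ≤ s) (ht : 1 ≤ t) (i j : Fin k) :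
    (Emat k s * Emat k t) i j =
      if (j : ℕ) + 2 = (i : ℕ) + s + t
        then ((((i : ℕ) + 1) * ((i : ℕ) + s) : ℕ) : ℂ) else 0 := by
  rw [Matrix.mul_apply]
  by_cases h : (j : ℕ) + 2 = (i : ℕ) + s + t
  · rw [if_pos h]
    have hl : (j : ℕ) + 1 - t < k := by omega
    rw [Finset.sum_eq_single (⟨(j : ℕ) + 1 - t, hl⟩ : Fin k)]
    · simp only [Emat, Fin.val_mk]
      rw [if_pos (by omega), if_pos (by omega)]
      rw [show (j : ℕ) + 1 - t = (i : ℕ) + s - 1 from by omega]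
      have : ((i : ℕ) + s - 1) + 1 = (i : ℕ) + s := by omega
      rw [show (((i:ℕ) + s - 1 : ℕ) : ℂ) + 1 = (((i:ℕ) + s : ℕ) : ℂ) from by
        rw [← this]; push_cast; ring]
      push_cast
      ring
    · intro l _ hne
      simp only [Emat]
      by_cases hc : (j : ℕ) + 1 = (l : ℕ) + t
      · exact absurd (Fin.ext (by simp only [Fin.val_mk]; omega)) hne
      · rw [if_neg hc, mul_zero]
    · intro hnot
      exact absurd (Finset.mem_univ _) hnot
  · rw [if_neg h]
    apply Finset.sum_eq_zero
    intro l _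
    simp only [Emat]
    by_cases h1 : (l : ℕ) + 1 = (i : ℕ) + s
    · by_cases h2 : (j : ℕ) + 1 = (l : ℕ) + t
      · exact absurd (by omega) h
      · rw [if_neg h2, mul_zero]
    · rw [if_neg h1, zero_mul]

lemma Emat_bracket (k s t : ℕ) (hs : 1 ≤ s) (ht : 1 ≤ t) :
    Emat k s * Emat k t - Emat k t * Emat k s
      = ((s : ℂ) - (t : ℂ)) • Emat k (s + t - 1) := by
  ext i j
  simp only [Matrix.sub_apply, Matrix.smul_apply, Emat_mul k s t hs ht,
    Emat_mul k t s ht hs, Emat, smul_eq_mul]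
  by_cases h : (j : ℕ) + 2 = (i : ℕ) + s + t
  · rw [if_pos h, if_pos (by omega), if_pos (by omega)]
    push_cast
    ring
  · rw [if_neg h, if_neg (by omega), if_neg (by omega)]
    simp

lemma Emat_eq_zero (k m : ℕ) (hm : k < m) : Emat k m = 0 := by
  ext i j
  simp only [Emat, Matrix.zero_apply]
  rw [if_neg (by omega)]

lemma gk_bracket_closed (k : ℕ) :
    ∀ x ∈ gkAlg k, ∀ y ∈ gkAlg k, x * y - y * x ∈ gkAlg k := by
  intro x hx
  induction hx using Submodule.span_induction with
  | mem a ha =>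
    intro y hy
    induction hy using Submodule.span_induction with
    | mem b hb =>
      obtain ⟨s, ⟨hs1, hs2⟩, rfl⟩ := ha
      obtain ⟨t, ⟨ht1, ht2⟩, rfl⟩ := hb
      rw [Emat_bracket k s t hs1 ht1]
      by_cases hk : s + t - 1 ≤ k
      · exact Submodule.smul_mem _ _
          (Submodule.subset_span ⟨s + t - 1, ⟨by omega, hk⟩, rfl⟩)
      · rw [Emat_eq_zero k _ (by omega)]
        simp
    | zero => simp
    | add b c hb hc ihb ihc =>
      have : a * (b + c) - (b + c) * a = (a * b - b * a) + (a * c - c * a) := by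
        noncomm_ring
      rw [this]; exact Submodule.add_mem _ ihb ihc
    | smul c b hb ih =>
      have : a * (c • b) - (c • b) * a = c • (a * b - b * a) := by
        rw [mul_smul_comm, smul_mul_assoc, smul_sub]
      rw [this]; exact Submodule.smul_mem _ _ ih
  | zero => intro y hy; simp
  | add b c hb hc ihb ihc =>
    intro y hy
    have : (b + c) * y - y * (b + c) = (b * y - y * b) + (c * y - y * c) := by
      noncomm_ring
    rw [this]; exact Submodule.add_mem _ (ihb y hy) (ihc y hy)
  | smul c b hb ih =>
    intro y hy
    have : (c • b) * y - y * (c • b) = c • (b * y - y * b) := by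
      rw [mul_smul_comm, smul_mul_assoc, smul_sub]
    rw [this]; exact Submodule.smul_mem _ _ (ih y hy)

/-- The bracket formula `[e_s, e_t] = (s - t)·e_{s+t−1}` (with `e_m = 0` for `m > k`);
consequently `g_k` is a Lie subalgebra of `gl_k(ℂ)` and `g_k = ℂ·e_1 ⊕ u_k`. -/
theorem Emat_bracket_and_gk_decomposition (k : ℕ) [NeZero k] :
    (∀ s t : ℕ, 1 ≤ s → s ≤ k → 1 ≤ t → t ≤ k →
      Emat k s * Emat k t - Emat k t * Emat k s
        = ((s : ℂ) - (t : ℂ)) • Emat k (s + t - 1)) ∧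
    (∀ x ∈ gkAlg k, ∀ y ∈ gkAlg k, x * y - y * x ∈ gkAlg k) ∧
    (Submodule.span ℂ {Emat k 1} ⊔ ukAlg k = gkAlg k) ∧
    (Submodule.span ℂ {Emat k 1} ⊓ ukAlg k = ⊥) := by
  have hk : 1 ≤ k := Nat.one_le_iff_ne_zero.mpr (NeZero.ne k)
  refine ⟨fun s t hs _ ht _ => Emat_bracket k s t hs ht, gk_bracket_closed k, ?_, ?_⟩
  · have hset : {s | 1 ≤ s ∧ s ≤ k} = {1} ∪ {s : ℕ | 2 ≤ s ∧ s ≤ k} := by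
      ext s; simp only [Set.mem_setOf_eq, Set.mem_union, Set.mem_singleton_iff]; omega
    rw [gkAlg, hset, Set.image_union, Set.image_singleton, Submodule.span_union]
    rfl
  · have hdiag : ∀ x ∈ ukAlg k, x 0 0 = 0 := by
      intro x hx
      induction hx using Submodule.span_induction with
      | mem a ha =>
        obtain ⟨s, ⟨hs2, _⟩, rfl⟩ := ha
        simp only [Emat]
        rw [if_neg (by omega)]
      | zero => simp
      | add b c hb hc ihb ihc => simp [Matrix.add_apply, ihb, ihc]
      | smul c b hb ih => simp [Matrix.smul_apply, ih]
    rw [eq_bot_iff]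
    rintro x ⟨hx1, hx2⟩
    obtain ⟨c, rfl⟩ := Submodule.mem_span_singleton.mp hx1
    have h0 := hdiag _ hx2
    have he : Emat k 1 0 0 = 1 := by
      simp [Emat]
    rw [Matrix.smul_apply, he, smul_eq_mul, mul_one] at h0
    simp [h0]
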